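/- Let X and Y be Banach spaces and suppose that for every finite-dimensional subspace E of X ⊗̂_π Y (the projective tensor product), every slice S of its unit ball, every bounded operator T ∈ L(X, Y*) and every ε > 0, there exist x ∈ S_X, y ∈ S_Y with x ⊗ y ∈ S and G ∈ L(X, Y*) such that G = T on E (viewing L(X,Y*) = (X ⊗̂_π Y)*), G(x)(y) = ‖T‖ and ‖G‖ ≤ (1 − ε)⁻¹‖T‖. Then X ⊗̂_π Y has the Daugavet property. -/

import Mathlib

/-- abstract formulation of the projective tensor product `Z = X ⊗̂_π Y`:
`t` is the tensor map, the closed unit ball of `Z` is the closed convex hull of the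
elementary tensors of unit vectors, and `ι` is the isometric identification of the
bilinear forms `L(X, Y*)` with `Z*`. If every operator `T ∈ L(X, Y*)` can be extended
(in the sense of the statement) from finite-dimensional subspaces while attaining its
norm at an elementary tensor of any prescribed slice, then `Z` has the Daugavet
property. -/
theorem stmt14 {X Y Z : Type*}
    [NormedAddCommGroup X] [NormedSpace ℝ X] [CompleteSpace X]
    [NormedAddCommGroup Y] [NormedSpace ℝ Y] [CompleteSpace Y]
    [NormedAddCommGroup Z] [NormedSpace ℝ Z] [CompleteSpace Z]
    (t : X →L[ℝ] Y →L[ℝ] Z)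
    (hball : Metric.closedBall (0 : Z) 1 =
      closure (convexHull ℝ {z : Z | ∃ x y, ‖x‖ = 1 ∧ ‖y‖ = 1 ∧ z = t x y}))
    (ι : (X →L[ℝ] Y →L[ℝ] ℝ) ≃ₗᵢ[ℝ] (Z →L[ℝ] ℝ))
    (hι : ∀ (G : X →L[ℝ] Y →L[ℝ] ℝ) (x : X) (y : Y), ι G (t x y) = G x y)
    (hyp : ∀ (E : Subspace ℝ Z), FiniteDimensional ℝ E →
      ∀ F : Z →L[ℝ] ℝ, F ≠ 0 → ∀ α > (0:ℝ),
      ∀ T : X →L[ℝ] Y →L[ℝ] ℝ, ∀ ε : ℝ, 0 < ε → ε < 1 →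
      ∃ (x : X) (y : Y) (G : X →L[ℝ] Y →L[ℝ] ℝ),
        ‖x‖ = 1 ∧ ‖y‖ = 1 ∧ ‖t x y‖ ≤ 1 ∧ F (t x y) > ‖F‖ - α ∧
        (∀ e ∈ E, ι G e = ι T e) ∧ G x y = ‖T‖ ∧ ‖G‖ ≤ (1 - ε)⁻¹ * ‖T‖) :
    ∀ ε > (0:ℝ), ∀ z : Z, ‖z‖ = 1 → ∀ F : Z →L[ℝ] ℝ, F ≠ 0 → ∀ α > (0:ℝ),
      ∃ w : Z, ‖w‖ ≤ 1 ∧ F w > ‖F‖ - α ∧ ‖z + w‖ > 2 - ε := by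

  intro ε hε z hz F hF α hα
  have hz0 : z ≠ 0 := by
    intro h; rw [h, norm_zero] at hz; norm_num at hz
  obtain ⟨f, hf1, hfz⟩ := exists_dual_vector ℝ z (norm_ne_zero_iff.mpr hz0)
  set ε' : ℝ := min ε 1 / 3 with hε'def
  have hε'0 : 0 < ε' := by positivity
  have hε'1 : ε' < 1 := by
    have : min ε 1 ≤ 1 := min_le_right _ _
    simp only [hε'def]; linarith
  have hε'half : ε' < ε / 2 := by
    have : min ε 1 ≤ ε := min_le_left _ _
    simp only [hε'def]; linarith
  set T : X →L[ℝ] Y →L[ℝ] ℝ := ι.symm f with hT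
  have hTnorm : ‖T‖ = 1 := by
    rw [hT, ι.symm.norm_map, hf1]
  have hE : FiniteDimensional ℝ (Submodule.span ℝ ({z} : Set Z)) := by
    infer_instance
  obtain ⟨x, y, G, hx, hy, hw1, hFw, hGE, hGxy, hGnorm⟩ :=
    hyp (Submodule.span ℝ ({z} : Set Z)) hE F hF α hα T ε' hε'0 hε'1
  refine ⟨t x y, hw1, hFw, ?_⟩
  have hιTz : ι T z = ‖z‖ := by
    rw [hT]; simpa using hfz
  have hGz : ι G z = 1 := by
    have := hGE z (Submodule.mem_span_singleton_self z)
    rw [this, hιTz, hz]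
  have hGw : ι G (t x y) = 1 := by rw [hι, hGxy, hTnorm]
  have hGsum : ι G (z + t x y) = 2 := by
    rw [map_add, hGz, hGw]; norm_num
  have hGne : G ≠ 0 := by
    intro h
    rw [h] at hGxy
    simp [hTnorm] at hGxy
  have hG1 : (1:ℝ) ≤ ‖G‖ := by
    have h1 : ‖G x y‖ = 1 := by rw [hGxy, hTnorm]; norm_num
    have h2 : ‖G x y‖ ≤ ‖G‖ * ‖x‖ * ‖y‖ := (G.le_opNorm x).trans (by
      exact le_of_eq rfl) |>.trans_eq rfl |> fun _ => G.le_opNorm₂ x y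
    rw [h1, hx, hy] at h2; linarith
  have hGpos : 0 < ‖G‖ := lt_of_lt_of_le one_pos hG1
  have hιGnorm : ‖ι G‖ = ‖G‖ := ι.norm_map G
  have hle : |ι G (z + t x y)| ≤ ‖G‖ * ‖z + t x y‖ := by
    rw [← hιGnorm]
    exact (ι G).le_opNorm _
  rw [hGsum] at hle
  have h2 : (2:ℝ) ≤ ‖G‖ * ‖z + t x y‖ := by
    calc (2:ℝ) = |2| := by norm_num
    _ ≤ _ := hle
  have hGle : ‖G‖ ≤ (1 - ε')⁻¹ := by
    simpa [hTnorm] using hGnorm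
  have h1ε' : 0 < 1 - ε' := by linarith
  have key : 2 * (1 - ε') ≤ ‖z + t x y‖ := by
    have hGle' : ‖G‖ * (1 - ε') ≤ 1 := by
      rw [← inv_inv (1 - ε')]
      calc ‖G‖ * (1 - ε')⁻¹⁻¹ ≤ (1 - ε')⁻¹ * (1 - ε')⁻¹⁻¹ := by
            apply mul_le_mul_of_nonneg_right hGle (by positivity)
      _ = 1 := by field_simp
    have hn0 : (0:ℝ) ≤ ‖z + t x y‖ := norm_nonneg _
    calc 2 * (1 - ε') ≤ (‖G‖ * ‖z + t x y‖) * (1 - ε') :=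
          mul_le_mul_of_nonneg_right h2 h1ε'.le
    _ = (‖G‖ * (1 - ε')) * ‖z + t x y‖ := by ring
    _ ≤ 1 * ‖z + t x y‖ := mul_le_mul_of_nonneg_right hGle' hn0
    _ = ‖z + t x y‖ := one_mul _
  linarith
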